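/- Smooth-grid cancellation: let f ∈ C³ and define Δxᵢ = f(φᵢ + h/2) − f(φᵢ − h/2), Δx_{i+1} = f(φᵢ + 3h/2) − f(φᵢ + h/2), Δx_{i−1} = f(φᵢ − h/2) − f(φᵢ − 3h/2) for a smooth strictly increasing map f and uniform step h. Then Δxᵢ²/(Δxᵢ + Δx_{i+1}) − Δx_{i−1}²/(Δxᵢ + Δx_{i−1}) = O(h²) as h → 0, whereas each summand individually is only O(h). -/

import Mathlib

open Asymptotics

set_option maxHeartbeats 1000000 in
/-- Smooth-grid cancellation: for a `C³` strictly increasing grid map `f` and uniform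
step `h`, with `Δxᵢ = f(φ + h/2) − f(φ − h/2)`, `Δx_{i+1} = f(φ + 3h/2) − f(φ + h/2)`,
`Δx_{i−1} = f(φ − h/2) − f(φ − 3h/2)`, one has
`Δxᵢ²/(Δxᵢ + Δx_{i+1}) − Δx_{i−1}²/(Δxᵢ + Δx_{i−1}) = O(h²)` as `h → 0⁺`, whereas each
summand individually is only `O(h)`. -/
theorem smooth_grid_cancellation
    (f : ℝ → ℝ) (φ : ℝ) (hf : ContDiff ℝ 3 f) (hf' : ∀ x, 0 < deriv f x) :
    ((fun h : ℝ =>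
        (f (φ + h / 2) - f (φ - h / 2)) ^ 2
            / ((f (φ + h / 2) - f (φ - h / 2)) + (f (φ + 3 * h / 2) - f (φ + h / 2)))
          - (f (φ - h / 2) - f (φ - 3 * h / 2)) ^ 2
            / ((f (φ + h / 2) - f (φ - h / 2)) + (f (φ - h / 2) - f (φ - 3 * h / 2))))
        =O[nhdsWithin 0 (Set.Ioi 0)] fun h => h ^ 2) ∧
    ((fun h : ℝ =>
        (f (φ + h / 2) - f (φ - h / 2)) ^ 2
          / ((f (φ + h / 2) - f (φ - h / 2)) + (f (φ + 3 * h / 2) - f (φ + h / 2))))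
        =O[nhdsWithin 0 (Set.Ioi 0)] fun h => h) ∧
    ((fun h : ℝ =>
        (f (φ - h / 2) - f (φ - 3 * h / 2)) ^ 2
          / ((f (φ + h / 2) - f (φ - h / 2)) + (f (φ - h / 2) - f (φ - 3 * h / 2))))
        =O[nhdsWithin 0 (Set.Ioi 0)] fun h => h) := by
  classical
  have hd1 : Differentiable ℝ f := hf.differentiable (by norm_num)
  have hfd2 : ContDiff ℝ 2 (deriv f) := by
    have h3 : ContDiff ℝ (2 + 1 : ℕ) f := by norm_num; exact hf
    exact (contDiff_succ_iff_deriv.mp (by exact_mod_cast h3)).2.2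
  have hd2 : Differentiable ℝ (deriv f) := hfd2.differentiable (by norm_num)
  have hc1 : Continuous (deriv f) := hfd2.continuous
  have hc2 : Continuous (deriv (deriv f)) :=
    (contDiff_one_iff_deriv.mp (hfd2.of_le (by norm_num))).2
  set s : Set ℝ := Set.Icc (φ - 2) (φ + 2) with hs
  have hφs : φ ∈ s := by constructor <;> [linarith; linarith]
  have hscomp : IsCompact s := isCompact_Icc
  have hsconv : Convex ℝ s := convex_Icc _ _
  have hsne : s.Nonempty := ⟨φ, hφs⟩
  obtain ⟨K, hK⟩ := hscomp.exists_bound_of_continuousOn hc2.continuousOn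
  have hK0 : 0 ≤ K := le_trans (norm_nonneg _) (hK φ hφs)
  obtain ⟨x₀, hx₀s, hx₀min⟩ := hscomp.exists_isMinOn hsne hc1.continuousOn
  set m := deriv f x₀ with hmdef
  have hm : 0 < m := hf' x₀
  have hmle : ∀ x ∈ s, m ≤ deriv f x := fun x hx => hx₀min hx
  obtain ⟨M, hM⟩ := hscomp.exists_bound_of_continuousOn hc1.continuousOn
  have hMle : ∀ x ∈ s, deriv f x ≤ M := fun x hx =>
    le_trans (le_abs_self _) (hM x hx)
  have hM0 : 0 < M := lt_of_lt_of_le hm (hMle x₀ hx₀s)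
  have lip : ∀ x ∈ s, ∀ y ∈ s, |deriv f x - deriv f y| ≤ K * |x - y| := by
    intro x hx y hy
    have := hsconv.norm_image_sub_le_of_norm_deriv_le (fun z _ => hd2 z) hK hy hx
    simpa [Real.norm_eq_abs] using this
  have mvt : ∀ a b : ℝ, a < b → ∃ c ∈ Set.Ioo a b, f b - f a = deriv f c * (b - a) := by
    intro a b hab
    obtain ⟨c, hc, hc'⟩ := exists_deriv_eq_slope f hab hd1.continuous.continuousOn
      hd1.differentiableOn
    refine ⟨c, hc, ?_⟩
    have hne : b - a ≠ 0 := sub_ne_zero.mpr hab.ne'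
    rw [hc']
    field_simp
  have key : ∀ h : ℝ, 0 < h → h ≤ 1 →
      |(f (φ + h / 2) - f (φ - h / 2)) ^ 2
            / ((f (φ + h / 2) - f (φ - h / 2)) + (f (φ + 3 * h / 2) - f (φ + h / 2)))
          - (f (φ - h / 2) - f (φ - 3 * h / 2)) ^ 2
            / ((f (φ + h / 2) - f (φ - h / 2)) + (f (φ - h / 2) - f (φ - 3 * h / 2)))|
          ≤ (11 * K * M ^ 2 / (4 * m ^ 2)) * h ^ 2 ∧
      |(f (φ + h / 2) - f (φ - h / 2)) ^ 2
          / ((f (φ + h / 2) - f (φ - h / 2)) + (f (φ + 3 * h / 2) - f (φ + h / 2)))| ≤ M * h ∧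
      |(f (φ - h / 2) - f (φ - 3 * h / 2)) ^ 2
          / ((f (φ + h / 2) - f (φ - h / 2)) + (f (φ - h / 2) - f (φ - 3 * h / 2)))| ≤ M * h := by
    intro h h0 h1
    have hmem : ∀ x : ℝ, φ - 3 * h / 2 ≤ x → x ≤ φ + 3 * h / 2 → x ∈ s := by
      intro x hx1 hx2
      constructor <;> [linarith; linarith]
    set A := f (φ + h / 2) - f (φ - h / 2) with hAdef
    set B := f (φ + 3 * h / 2) - f (φ + h / 2) with hBdef
    set C := f (φ - h / 2) - f (φ - 3 * h / 2) with hCdef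
    obtain ⟨ξA, hξAm, hξA⟩ := mvt (φ - h / 2) (φ + h / 2) (by linarith)
    obtain ⟨ξB, hξBm, hξB⟩ := mvt (φ + h / 2) (φ + 3 * h / 2) (by linarith)
    obtain ⟨ξC, hξCm, hξC⟩ := mvt (φ - 3 * h / 2) (φ - h / 2) (by linarith)
    have hξAs : ξA ∈ s := hmem _ (by linarith [hξAm.1]) (by linarith [hξAm.2])
    have hξBs : ξB ∈ s := hmem _ (by linarith [hξBm.1]) (by linarith [hξBm.2])
    have hξCs : ξC ∈ s := hmem _ (by linarith [hξCm.1]) (by linarith [hξCm.2])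
    have hA : A = deriv f ξA * h := by rw [hAdef, hξA]; ring
    have hB : B = deriv f ξB * h := by rw [hBdef, hξB]; ring
    have hC : C = deriv f ξC * h := by rw [hCdef, hξC]; ring
    have hAl : m * h ≤ A := by rw [hA]; nlinarith [hmle ξA hξAs]
    have hAu : A ≤ M * h := by rw [hA]; nlinarith [hMle ξA hξAs]
    have hBl : m * h ≤ B := by rw [hB]; nlinarith [hmle ξB hξBs]
    have hBu : B ≤ M * h := by rw [hB]; nlinarith [hMle ξB hξBs]
    have hCl : m * h ≤ C := by rw [hC]; nlinarith [hmle ξC hξCs]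
    have hCu : C ≤ M * h := by rw [hC]; nlinarith [hMle ξC hξCs]
    have hApos : 0 < A := lt_of_lt_of_le (by positivity) hAl
    have hBpos : 0 < B := lt_of_lt_of_le (by positivity) hBl
    have hCpos : 0 < C := lt_of_lt_of_le (by positivity) hCl
    have hAB : 0 < A + B := by linarith
    have hACp : 0 < A + C := by linarith
    -- second-difference bounds
    have hAC : |A - C| ≤ 2 * K * h ^ 2 := by
      have hlip := lip ξA hξAs ξC hξCs
      have hdist : |ξA - ξC| ≤ 2 * h := by
        rw [abs_le]
        constructor <;> [linarith [hξAm.1, hξCm.2]; linarith [hξAm.2, hξCm.1]]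
      have h1' : |deriv f ξA - deriv f ξC| ≤ K * (2 * h) :=
        le_trans hlip (mul_le_mul_of_nonneg_left hdist hK0)
      have heq : A - C = (deriv f ξA - deriv f ξC) * h := by rw [hA, hC]; ring
      rw [heq, abs_mul, abs_of_pos h0]
      calc |deriv f ξA - deriv f ξC| * h ≤ K * (2 * h) * h :=
            mul_le_mul_of_nonneg_right h1' h0.le
        _ = 2 * K * h ^ 2 := by ring
    have hCB : |C - B| ≤ 3 * K * h ^ 2 := by
      have hlip := lip ξC hξCs ξB hξBs
      have hdist : |ξC - ξB| ≤ 3 * h := by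
        rw [abs_le]
        constructor <;> [linarith [hξCm.1, hξBm.2]; linarith [hξCm.2, hξBm.1]]
      have h1' : |deriv f ξC - deriv f ξB| ≤ K * (3 * h) :=
        le_trans hlip (mul_le_mul_of_nonneg_left hdist hK0)
      have heq : C - B = (deriv f ξC - deriv f ξB) * h := by rw [hC, hB]; ring
      rw [heq, abs_mul, abs_of_pos h0]
      calc |deriv f ξC - deriv f ξB| * h ≤ K * (3 * h) * h :=
            mul_le_mul_of_nonneg_right h1' h0.le
        _ = 3 * K * h ^ 2 := by ring
    refine ⟨?_, ?_, ?_⟩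
    · have key_eq : A ^ 2 / (A + B) - C ^ 2 / (A + C)
          = ((A - C) * (A + C) ^ 2 + C ^ 2 * (C - B)) / ((A + B) * (A + C)) := by
        field_simp
        ring
      have habs : |(A - C) * (A + C) ^ 2 + C ^ 2 * (C - B)| ≤ 11 * K * M ^ 2 * h ^ 4 := by
        have e0 : |(A - C) * (A + C) ^ 2 + C ^ 2 * (C - B)|
            ≤ |A - C| * (A + C) ^ 2 + C ^ 2 * |C - B| := by
          refine le_trans (abs_add_le _ _) ?_
          rw [abs_mul, abs_mul, abs_of_nonneg (by positivity : (0:ℝ) ≤ (A + C) ^ 2),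
            abs_of_nonneg (by positivity : (0:ℝ) ≤ C ^ 2)]
        refine le_trans e0 ?_
        have e1 : |A - C| * (A + C) ^ 2 ≤ (2 * K * h ^ 2) * (2 * M * h) ^ 2 := by
          apply mul_le_mul hAC (by nlinarith) (by positivity) (by positivity)
        have e2 : C ^ 2 * |C - B| ≤ (M * h) ^ 2 * (3 * K * h ^ 2) := by
          apply mul_le_mul (by nlinarith) hCB (abs_nonneg _) (by positivity)
        nlinarith
      rw [key_eq, abs_div, abs_of_pos (mul_pos hAB hACp)]
      have hdenge : 4 * m ^ 2 * h ^ 2 ≤ (A + B) * (A + C) := by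
        have h2m : 2 * (m * h) ≤ A + B := by linarith
        have h2m' : 2 * (m * h) ≤ A + C := by linarith
        nlinarith [mul_le_mul h2m h2m' (by positivity : (0:ℝ) ≤ 2 * (m * h))
          (le_trans (by positivity : (0:ℝ) ≤ 2 * (m * h)) h2m)]
      calc |(A - C) * (A + C) ^ 2 + C ^ 2 * (C - B)| / ((A + B) * (A + C))
          ≤ (11 * K * M ^ 2 * h ^ 4) / (4 * m ^ 2 * h ^ 2) :=
            div_le_div₀ (by positivity) habs (by positivity) hdenge
        _ = (11 * K * M ^ 2 / (4 * m ^ 2)) * h ^ 2 := by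
            field_simp
    · rw [abs_of_nonneg (div_nonneg (by positivity) hAB.le)]
      have : A ^ 2 / (A + B) ≤ A := by
        rw [div_le_iff₀ hAB]
        nlinarith
      linarith
    · rw [abs_of_nonneg (div_nonneg (by positivity) hACp.le)]
      have : C ^ 2 / (A + C) ≤ C := by
        rw [div_le_iff₀ hACp]
        nlinarith
      linarith
  have hmemIoc : Set.Ioc (0:ℝ) 1 ∈ nhdsWithin (0:ℝ) (Set.Ioi 0) :=
    Ioc_mem_nhdsGT_of_mem (by constructor <;> norm_num)
  refine ⟨?_, ?_, ?_⟩
  · rw [isBigO_iff]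
    refine ⟨11 * K * M ^ 2 / (4 * m ^ 2), ?_⟩
    filter_upwards [hmemIoc] with h hh
    have := (key h hh.1 hh.2).1
    rw [Real.norm_eq_abs, Real.norm_eq_abs, abs_of_pos (pow_pos hh.1 2)]
    exact this
  · rw [isBigO_iff]
    refine ⟨M, ?_⟩
    filter_upwards [hmemIoc] with h hh
    have := (key h hh.1 hh.2).2.1
    rw [Real.norm_eq_abs, Real.norm_eq_abs, abs_of_pos hh.1]
    exact this
  · rw [isBigO_iff]
    refine ⟨M, ?_⟩
    filter_upwards [hmemIoc] with h hh
    have := (key h hh.1 hh.2).2.2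
    rw [Real.norm_eq_abs, Real.norm_eq_abs, abs_of_pos hh.1]
    exact this
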